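/- Let (Ω, F, P) be a probability space, T > 0, and X = (X_t)_{0≤t≤T} a real-valued stochastic process (each X_t measurable). Suppose there exist constants α > 0, β > 0, C > 0 and a continuous function F : [0, T] → ℝ of bounded variation such that E[|X_t − X_s|^α] ≤ C·|F(t) − F(s)|^{1+β} for all s, t ∈ [0, T]. Then X admits a continuous modification: there exists a process Y = (Y_t)_{0≤t≤T} such that for every ω the path t ↦ Y_t(ω) is continuous on [0, T], and for every t ∈ [0, T], P(X_t = Y_t) = 1. -/

import Mathlib

open MeasureTheory Set Filter Topology


lemma evar_right_small {F : ℝ → ℝ} {t T₁ : ℝ} (htT : t < T₁)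
    (hFc : ContinuousWithinAt F (Set.Icc t T₁) t)
    (hbv : eVariationOn F (Set.Icc t T₁) ≠ ⊤) {ε : ℝ} (hε : 0 < ε) :
    ∃ c, t < c ∧ c ≤ T₁ ∧ eVariationOn F (Set.Icc t c) ≤ ENNReal.ofReal ε := by
  set A := eVariationOn F (Set.Icc t T₁) with hA
  set ε' := ENNReal.ofReal (ε/2) with hε'def
  have hε'pos : 0 < ε' := ENNReal.ofReal_pos.2 (by linarith)
  have h2ε' : ε' + ε' = ENNReal.ofReal ε := by
    rw [hε'def, ← ENNReal.ofReal_add (by linarith) (by linarith)]; ring_nf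
  by_cases hAle : A ≤ ENNReal.ofReal ε
  · exact ⟨T₁, htT, le_refl _, hAle⟩
  push_neg at hAle
  have hA0 : A ≠ 0 := by
    intro h; rw [h] at hAle; exact (not_lt.2 zero_le) hAle
  have h1 : A - ε' < A := ENNReal.sub_lt_self hbv hA0 (ne_of_gt hε'pos)
  rw [hA, eVariationOn, lt_iSup_iff] at h1
  obtain ⟨⟨n, ⟨u, hu, hus⟩⟩, hp⟩ := h1
  simp only at hp
  -- continuity
  rw [Metric.continuousWithinAt_iff] at hFc
  obtain ⟨δ, hδ, hδF⟩ := hFc (ε/2) (by linarith)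
  set base := min T₁ (t + δ/2) with hbase
  have hbt : t < base := lt_min htT (by linarith)
  have hbT : base ≤ T₁ := min_le_left _ _
  have hbδ : base - t < δ := by
    have : base ≤ t + δ/2 := min_le_right _ _
    linarith
  set c := min base ((Finset.range (n+1)).inf' Finset.nonempty_range_add_one
      (fun i => if t < u i then u i else base)) with hc
  have htc : t < c := by
    refine lt_min hbt ?_
    rw [Finset.lt_inf'_iff]
    intro i _
    by_cases h : t < u i <;> simp [h, hbt]
  have hcb : c ≤ base := min_le_left _ _
  have hcT : c ≤ T₁ := hcb.trans hbT
  have hcu : ∀ i, i ≤ n → t < u i → c ≤ u i := by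
    intro i hi hti
    refine (min_le_right _ _).trans ?_
    have := Finset.inf'_le (b := i) (fun i => if t < u i then u i else base)
      (Finset.mem_range.2 (Nat.lt_succ_of_le hi))
    rwa [if_pos hti] at this
  have hcmem : c ∈ Set.Icc t T₁ := ⟨htc.le, hcT⟩
  have hFct : edist (F c) (F t) ≤ ε' := by
    rw [edist_dist]
    refine ENNReal.ofReal_le_ofReal ?_
    refine (hδF hcmem ?_).le
    rw [Real.dist_eq, abs_of_nonneg (by linarith)]
    linarith [hcb, hbδ]
  set w := fun i => max (u i) c with hw
  have hwmono : Monotone w := fun i j hij => max_le_max (hu hij) le_rfl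
  have hws : ∀ i, w i ∈ Set.Icc c T₁ :=
    fun i => ⟨le_max_right _ _, max_le (hus i).2 hcT⟩
  set W := eVariationOn F (Set.Icc c T₁) with hWdef
  have hsum : ∀ i, i < n → edist (F (u (i+1))) (F (u i)) ≤
      edist (F (w (i+1))) (F (w i)) +
      (if u i ≤ t ∧ t < u (i+1) then ε' else 0) := by
    intro i hi
    rcases le_or_gt (u i) t with h1 | h1
    · have hui : u i = t := le_antisymm h1 (hus i).1
      rcases le_or_gt (u (i+1)) t with h2 | h2
      · have : u (i+1) = t := le_antisymm h2 (hus (i+1)).1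
        rw [hui, this, edist_self]
        exact zero_le
      · have hwi : w i = c := by
          rw [hw]; simp only [hui]; exact max_eq_right htc.le
        have hwi1 : w (i+1) = u (i+1) := max_eq_left (hcu (i+1) hi h2)
        have : edist (F (u (i+1))) (F (u i)) ≤
            edist (F (u (i+1))) (F c) + edist (F c) (F (u i)) := edist_triangle _ _ _
        rw [if_pos ⟨h1, h2⟩, hwi, hwi1]
        refine this.trans (add_le_add le_rfl ?_)
        rw [hui]; exact hFct
    · have hwi : w i = u i := max_eq_left (hcu i hi.le h1)
      have hwi1 : w (i+1) = u (i+1) := max_eq_left (hcu (i+1) hi (h1.trans_le (hu (Nat.le_succ i))))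
      rw [hwi, hwi1]
      exact le_add_right le_rfl
  have hsum2 : (∑ i ∈ Finset.range n, edist (F (u (i+1))) (F (u i))) ≤ W + ε' := by
    calc (∑ i ∈ Finset.range n, edist (F (u (i+1))) (F (u i)))
        ≤ ∑ i ∈ Finset.range n, (edist (F (w (i+1))) (F (w i)) +
            (if u i ≤ t ∧ t < u (i+1) then ε' else 0)) := by
          refine Finset.sum_le_sum fun i hi => hsum i (Finset.mem_range.1 hi)
      _ = (∑ i ∈ Finset.range n, edist (F (w (i+1))) (F (w i))) +
            ∑ i ∈ Finset.range n, (if u i ≤ t ∧ t < u (i+1) then ε' else 0) :=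
          Finset.sum_add_distrib
      _ ≤ W + ε' := by
          refine add_le_add (eVariationOn.sum_le (f := F) (n := n) hwmono hws) ?_
          have hcard : ((Finset.range n).filter (fun i => u i ≤ t ∧ t < u (i+1))).card ≤ 1 := by
            refine Finset.card_le_one.2 fun a ha b hb => ?_
            simp only [Finset.mem_filter] at ha hb
            by_contra hab
            rcases lt_or_gt_of_ne hab with h | h
            · exact absurd (ha.2.2.trans_le ((hu h).trans hb.2.1)) (lt_irrefl t)
            · exact absurd (hb.2.2.trans_le ((hu h).trans ha.2.1)) (lt_irrefl t)
          rw [← Finset.sum_filter, Finset.sum_const]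
          rcases Nat.le_one_iff_eq_zero_or_eq_one.1 hcard with h | h <;> simp [h]
  have hW : W ≤ A := by
    rw [hWdef, hA]
    exact eVariationOn.mono F (Set.Icc_subset_Icc htc.le le_rfl)
  have hWne : W ≠ ⊤ := fun h => hbv (top_le_iff.1 (h ▸ hW))
  have hsplit : eVariationOn F (Set.Icc t c) + W = A := by
    have h := eVariationOn.Icc_add_Icc F (s := Set.Icc t T₁) htc.le hcT hcmem
    have e1 : Set.Icc t T₁ ∩ Set.Icc t c = Set.Icc t c := by
      rw [Set.Icc_inter_Icc, sup_idem, inf_eq_right.2 hcT]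
    have e2 : Set.Icc t T₁ ∩ Set.Icc c T₁ = Set.Icc c T₁ := by
      rw [Set.Icc_inter_Icc, inf_idem, sup_eq_right.2 htc.le]
    have e3 : Set.Icc t T₁ ∩ Set.Icc t T₁ = Set.Icc t T₁ := Set.inter_self _
    rw [e1, e2, e3] at h
    exact h
  have hε'le : ε' ≤ A := by
    refine le_of_lt (lt_of_le_of_lt ?_ hAle)
    exact ENNReal.ofReal_le_ofReal (by linarith)
  have hkey : A ≤ (ε' + ε') + W := by
    calc A = (A - ε') + ε' := (tsub_add_cancel_of_le hε'le).symm
      _ ≤ (∑ i ∈ Finset.range n, edist (F (u (i+1))) (F (u i))) + ε' :=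
          add_le_add hp.le le_rfl
      _ ≤ (W + ε') + ε' := add_le_add hsum2 le_rfl
      _ = (ε' + ε') + W := by ring
  have hfin : eVariationOn F (Set.Icc t c) ≤ ε' + ε' := by
    rw [← hsplit] at hkey
    exact (ENNReal.add_le_add_iff_right hWne).1 hkey
  exact ⟨c, htc, hcT, by rwa [h2ε'] at hfin⟩

lemma evar_left_small {F : ℝ → ℝ} {t T₀ : ℝ} (htT : T₀ < t)
    (hFc : ContinuousWithinAt F (Set.Icc T₀ t) t)
    (hbv : eVariationOn F (Set.Icc T₀ t) ≠ ⊤) {ε : ℝ} (hε : 0 < ε) :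
    ∃ c, T₀ ≤ c ∧ c < t ∧ eVariationOn F (Set.Icc c t) ≤ ENNReal.ofReal ε := by
  have himg : ∀ a b : ℝ, (fun x : ℝ => -x) '' Set.Icc a b = Set.Icc (-b) (-a) := by
    intro a b
    ext x
    simp only [Set.mem_image, Set.mem_Icc]
    constructor
    · rintro ⟨y, ⟨h1, h2⟩, rfl⟩
      constructor <;> linarith
    · rintro ⟨h1, h2⟩
      exact ⟨-x, ⟨by linarith, by linarith⟩, by ring⟩
  have hanti : ∀ a b : ℝ, AntitoneOn (fun x : ℝ => -x) (Set.Icc a b) :=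
    fun a b x _ y _ h => neg_le_neg h
  have hcomp : ∀ a b : ℝ, eVariationOn (fun x => F (-x)) (Set.Icc a b)
      = eVariationOn F (Set.Icc (-b) (-a)) := by
    intro a b
    have := eVariationOn.comp_eq_of_antitoneOn F (fun x : ℝ => -x) (hanti a b)
    rw [himg] at this
    exact this
  have h1 : ContinuousWithinAt (fun x : ℝ => -x) (Set.Icc (-t) (-T₀)) (-t) :=
    continuous_neg.continuousAt.continuousWithinAt
  have hFc' : ContinuousWithinAt F (Set.Icc T₀ t) ((fun x : ℝ => -x) (-t)) := by
    simpa [neg_neg] using hFc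
  have hGc : ContinuousWithinAt (fun x => F (-x)) (Set.Icc (-t) (-T₀)) (-t) := by
    refine hFc'.comp h1 ?_
    intro x hx
    exact ⟨by linarith [hx.2], by linarith [hx.1]⟩
  have hbv' : eVariationOn (fun x => F (-x)) (Set.Icc (-t) (-T₀)) ≠ ⊤ := by
    rw [hcomp]
    simpa [neg_neg] using hbv
  obtain ⟨c', h1', h2', h3'⟩ := evar_right_small (by linarith : -t < -T₀) hGc hbv' hε
  refine ⟨-c', by linarith, by linarith, ?_⟩
  rw [hcomp (-t) c'] at h3'
  simpa [neg_neg] using h3'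

lemma variation_continuousOn {F : ℝ → ℝ} {a b : ℝ} (hFc : Continuous F)
    (hbv : BoundedVariationOn F (Set.Icc a b)) {l u : ℝ} (hal : a < l) (hub : u < b) :
    ContinuousOn (fun x => variationOnFromTo F (Set.Icc a b) a x) (Set.Icc l u) := by
  have hlbv : LocallyBoundedVariationOn F (Set.Icc a b) := hbv.locallyBoundedVariationOn
  rw [Metric.continuousOn_iff]
  intro t ht ε hε
  have hta : a < t := lt_of_lt_of_le hal ht.1
  have htb : t < b := lt_of_le_of_lt ht.2 hub
  have htmem : t ∈ Set.Icc a b := ⟨hta.le, htb.le⟩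
  have hbvr : eVariationOn F (Set.Icc t b) ≠ ⊤ :=
    fun h => hbv (top_le_iff.1 (h ▸ eVariationOn.mono F (Set.Icc_subset_Icc hta.le le_rfl)))
  have hbvl : eVariationOn F (Set.Icc a t) ≠ ⊤ :=
    fun h => hbv (top_le_iff.1 (h ▸ eVariationOn.mono F (Set.Icc_subset_Icc le_rfl htb.le)))
  obtain ⟨cr, hcr1, hcr2, hcr3⟩ := evar_right_small htb hFc.continuousWithinAt hbvr
    (half_pos hε)
  obtain ⟨cl, hcl1, hcl2, hcl3⟩ := evar_left_small hta hFc.continuousWithinAt hbvl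
    (half_pos hε)
  refine ⟨min (cr - t) (t - cl), lt_min (by linarith) (by linarith), ?_⟩
  intro x hx hdist
  have hxa : a < x := lt_of_lt_of_le hal hx.1
  have hxb : x < b := lt_of_le_of_lt hx.2 hub
  have hxmem : x ∈ Set.Icc a b := ⟨hxa.le, hxb.le⟩
  have hamem : a ∈ Set.Icc a b := ⟨le_rfl, by linarith⟩
  rw [Real.dist_eq] at hdist ⊢
  rcases le_total t x with hle | hle
  · have hadd := variationOnFromTo.add hlbv hamem htmem hxmem
    have heq : variationOnFromTo F (Set.Icc a b) t x
        = (eVariationOn F (Set.Icc a b ∩ Set.Icc t x)).toReal :=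
      variationOnFromTo.eq_of_le F _ hle
    have hnn : 0 ≤ variationOnFromTo F (Set.Icc a b) t x :=
      variationOnFromTo.nonneg_of_le F _ hle
    have hxcr : x ≤ cr := by
      have : |x - t| < cr - t := hdist.trans_le (min_le_left _ _)
      rw [abs_of_nonneg (by linarith)] at this
      linarith
    have hmon : eVariationOn F (Set.Icc a b ∩ Set.Icc t x)
        ≤ eVariationOn F (Set.Icc t cr) :=
      eVariationOn.mono F (fun y hy => ⟨hy.2.1, hy.2.2.trans hxcr⟩)
    have : variationOnFromTo F (Set.Icc a b) t x ≤ ε/2 := by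
      rw [heq]
      exact ENNReal.toReal_le_of_le_ofReal (by linarith) (hmon.trans hcr3)
    have habs : |variationOnFromTo F (Set.Icc a b) a x
        - variationOnFromTo F (Set.Icc a b) a t|
        = variationOnFromTo F (Set.Icc a b) t x := by
      rw [← hadd, abs_of_nonneg (by linarith)]
      ring
    rw [habs]
    linarith
  · have hadd := variationOnFromTo.add hlbv hamem hxmem htmem
    have heq : variationOnFromTo F (Set.Icc a b) x t
        = (eVariationOn F (Set.Icc a b ∩ Set.Icc x t)).toReal :=
      variationOnFromTo.eq_of_le F _ hle
    have hnn : 0 ≤ variationOnFromTo F (Set.Icc a b) x t :=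
      variationOnFromTo.nonneg_of_le F _ hle
    have hxcl : cl ≤ x := by
      have : |x - t| < t - cl := hdist.trans_le (min_le_right _ _)
      rw [abs_of_nonpos (by linarith), neg_sub] at this
      linarith
    have hmon : eVariationOn F (Set.Icc a b ∩ Set.Icc x t)
        ≤ eVariationOn F (Set.Icc cl t) :=
      eVariationOn.mono F (fun y hy => ⟨hxcl.trans hy.2.1, hy.2.2⟩)
    have : variationOnFromTo F (Set.Icc a b) x t ≤ ε/2 := by
      rw [heq]
      exact ENNReal.toReal_le_of_le_ofReal (by linarith) (hmon.trans hcl3)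
    have habs : |variationOnFromTo F (Set.Icc a b) a x
        - variationOnFromTo F (Set.Icc a b) a t|
        = variationOnFromTo F (Set.Icc a b) x t := by
      rw [← hadd, abs_of_nonpos (by linarith)]
      ring
    rw [habs]
    linarith


lemma markov_bound {Ω : Type*} [MeasurableSpace Ω] (P : Measure Ω) {W : Ω → ℝ}
    (hW : Measurable W) {α : ℝ} (hα : 0 < α) {B ε : ℝ} (hε : 0 < ε)
    (h : ∫⁻ ω, ENNReal.ofReal (|W ω| ^ α) ∂P ≤ ENNReal.ofReal B) :
    P {ω | ε < |W ω|} ≤ ENNReal.ofReal (B / ε ^ α) := by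
  have hmeas : AEMeasurable (fun ω => ENNReal.ofReal (|W ω| ^ α)) P := by
    have h1 : Measurable (fun ω => |W ω| ^ α) :=
      (Real.continuous_rpow_const hα.le).measurable.comp hW.abs
    exact (ENNReal.measurable_ofReal.comp h1).aemeasurable
  have hεα : 0 < ε ^ α := Real.rpow_pos_of_pos hε α
  have hsub : {ω | ε < |W ω|} ⊆
      {ω | ENNReal.ofReal (ε ^ α) ≤ ENNReal.ofReal (|W ω| ^ α)} := by
    intro ω hω
    exact ENNReal.ofReal_le_ofReal (Real.rpow_le_rpow hε.le (le_of_lt hω) hα.le)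
  have hmul := mul_meas_ge_le_lintegral₀ hmeas (ENNReal.ofReal (ε ^ α))
  have h2 : ENNReal.ofReal (ε ^ α) * P {ω | ε < |W ω|} ≤ ENNReal.ofReal B := by
    refine le_trans ?_ (hmul.trans h)
    exact mul_le_mul_right (measure_mono hsub) _
  have hne0 : ENNReal.ofReal (ε ^ α) ≠ 0 := (ENNReal.ofReal_pos.2 hεα).ne'
  have hneT : ENNReal.ofReal (ε ^ α) ≠ ⊤ := ENNReal.ofReal_ne_top
  rw [ENNReal.ofReal_div_of_pos hεα]
  rw [ENNReal.le_div_iff_mul_le (Or.inl hne0) (Or.inl hneT), mul_comm]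
  exact h2

lemma ae_eventually_notin {Ω : Type*} [MeasurableSpace Ω] (P : Measure Ω) (A : ℕ → Set Ω)
    (h : ∑' n, P (A n) ≠ ⊤) : ∀ᵐ ω ∂P, ∃ N, ∀ n ≥ N, ω ∉ A n := by
  have h0 := MeasureTheory.measure_limsup_atTop_eq_zero (μ := P) h
  rw [ae_iff]
  refine measure_mono_null ?_ h0
  intro ω hω
  simp only [Set.mem_setOf_eq] at hω
  push_neg at hω
  rw [mem_limsup_iff_frequently_mem, Filter.frequently_atTop]
  intro N
  obtain ⟨n, hn, hmem⟩ := hω N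
  exact ⟨n, hn, hmem⟩

lemma tsum_ofReal_geom_ne_top {c ρ : ℝ} (hc : 0 ≤ c) (hρ0 : 0 ≤ ρ) (hρ1 : ρ < 1) :
    (∑' n : ℕ, ENNReal.ofReal (c * ρ ^ n)) ≠ ⊤ := by
  have heq : ∀ n : ℕ, ENNReal.ofReal (c * ρ ^ n)
      = ENNReal.ofReal c * (ENNReal.ofReal ρ) ^ n := by
    intro n
    rw [ENNReal.ofReal_mul hc, ENNReal.ofReal_pow hρ0]
  rw [tsum_congr heq, ENNReal.tsum_mul_left, ENNReal.tsum_geometric]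
  refine ENNReal.mul_ne_top ENNReal.ofReal_ne_top ?_
  rw [Ne, ENNReal.inv_eq_top, tsub_eq_zero_iff_le]
  exact fun hcon => absurd (lt_of_le_of_lt hcon (ENNReal.ofReal_lt_one.2 hρ1)) (lt_irrefl _)

noncomputable def dy (n : ℕ) (u : ℝ) : ℝ := (⌊u * 2 ^ n⌋ : ℤ) / (2 : ℝ) ^ n

lemma dy_le (n : ℕ) (u : ℝ) : dy n u ≤ u := by
  rw [dy, div_le_iff₀ (by positivity)]
  exact Int.floor_le _

lemma dy_lt (n : ℕ) (u : ℝ) : u - dy n u < (1/2 : ℝ) ^ n := by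
  have h := Int.lt_floor_add_one (u * 2 ^ n)
  rw [dy]
  rw [div_pow, one_pow]
  rw [sub_lt_iff_lt_add, ← add_div, lt_div_iff₀ (by positivity : (0:ℝ) < 2 ^ n)]
  linarith
lemma dy_nonneg {u : ℝ} (hu : 0 ≤ u) (n : ℕ) : 0 ≤ dy n u := by
  have : (0 : ℤ) ≤ ⌊u * 2 ^ n⌋ := Int.floor_nonneg.2 (by positivity)
  rw [dy]
  positivity
lemma dy_le_one {u : ℝ} (hu : u ≤ 1) (n : ℕ) : dy n u ≤ 1 := by
  refine (dy_le n u).trans hu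
lemma dy_mem {u : ℝ} (hu : u ∈ Set.Icc (0:ℝ) 1) (n : ℕ) : dy n u ∈ Set.Icc (0:ℝ) 1 :=
  ⟨dy_nonneg hu.1 n, dy_le_one hu.2 n⟩
lemma dy_one (n : ℕ) : dy n 1 = 1 := by
  rw [dy, one_mul]
  rw [show ((2:ℝ) ^ n) = ((2 ^ n : ℤ) : ℝ) by push_cast; ring, Int.floor_intCast]
  rw [div_self (by positivity)]

noncomputable def Yr (f : ℝ → ℝ) (u : ℝ) : ℝ :=
  limUnder atTop (fun n => f (dy n u))

lemma chain_all {f : ℝ → ℝ} {r : ℝ} (hr0 : 0 < r) (hr1 : r < 1) {N : ℕ}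
    (H : ∀ n ≥ N, ∀ k : ℤ, 0 ≤ k → k + 1 ≤ 2 ^ n →
      |f (((k : ℝ) + 1) / 2 ^ n) - f ((k : ℝ) / 2 ^ n)| ≤ r ^ n) :
    (∀ u ∈ Set.Icc (0:ℝ) 1, Tendsto (fun n => f (dy n u)) atTop (𝓝 (Yr f u))) ∧
    ContinuousOn (Yr f) (Set.Icc 0 1) := by
  have h1r : (0:ℝ) < 1 - r := by linarith
  -- step estimate between consecutive dyadic levels
  have hstep : ∀ n ≥ N, ∀ u ∈ Set.Icc (0:ℝ) 1,
      |f (dy (n+1) u) - f (dy n u)| ≤ r ^ (n+1) := by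
    intro n hn u hu
    rcases eq_or_lt_of_le hu.2 with h1 | h1
    · rw [h1, dy_one, dy_one, sub_self, abs_zero]
      positivity
    · have hu0 : 0 ≤ u := hu.1
      set m := ⌊u * 2^n⌋ with hm
      set k := ⌊u * 2^(n+1)⌋ with hk
      have h2n : (0:ℝ) < 2^n := by positivity
      have h2n1 : (0:ℝ) < 2^(n+1) := by positivity
      have hfl1 : (m:ℝ) ≤ u * 2^n := Int.floor_le _
      have hfl2 : u * 2^n < (m:ℝ) + 1 := Int.lt_floor_add_one _
      have hklt : k < 2^(n+1) := by
        rw [hk, Int.floor_lt]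
        push_cast
        nlinarith
      have hmle : 2*m ≤ k := by
        rw [hk, Int.le_floor]
        push_cast
        rw [pow_succ]
        nlinarith
      have hklt2 : k < 2*m + 2 := by
        rw [hk, Int.floor_lt]
        push_cast
        rw [pow_succ]
        nlinarith
      have hcases : k = 2*m ∨ k = 2*m + 1 := by omega
      rcases hcases with h | h
      · have heq : dy (n+1) u = dy n u := by
          rw [dy, dy, ← hk, ← hm, h]
          push_cast
          rw [pow_succ]
          field_simp
        rw [heq, sub_self, abs_zero]
        positivity
      · have hm0 : (0:ℤ) ≤ m := Int.floor_nonneg.2 (mul_nonneg hu0 h2n.le)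
        have h2m0 : (0:ℤ) ≤ 2*m := by omega
        have h2m1 : 2*m + 1 ≤ 2^(n+1) := by rw [← h]; exact hklt.le
        have happ := H (n+1) (le_trans hn (Nat.le_succ n)) (2*m) h2m0 h2m1
        have e1 : ((2*m : ℤ):ℝ)/2^(n+1) = dy n u := by
          rw [dy, ← hm]
          push_cast
          rw [pow_succ]
          field_simp
        have e2 : (((2*m : ℤ):ℝ)+1)/2^(n+1) = dy (n+1) u := by
          rw [dy, ← hk, h]
          push_cast
          ring
        rw [e1, e2] at happ
        exact happ
  -- neighbor estimate at a fixed level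
  have hnbr : ∀ m ≥ N, ∀ u v : ℝ, u ∈ Set.Icc (0:ℝ) 1 → v ∈ Set.Icc (0:ℝ) 1 →
      u ≤ v → v - u ≤ (1/2)^m → |f (dy m v) - f (dy m u)| ≤ r ^ m := by
    intro m hm u v hu hv huv hclose
    have h2m : (0:ℝ) < 2^m := by positivity
    set j := ⌊u * 2^m⌋ with hj
    set k := ⌊v * 2^m⌋ with hk
    have hjk : j ≤ k := Int.floor_le_floor (by nlinarith)
    have hhalf : (1/2:ℝ)^m * 2^m = 1 := by
      rw [div_pow, one_pow, div_mul_cancel₀]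
      exact ne_of_gt h2m
    have hkj : k ≤ j + 1 := by
      have hle : v * 2^m ≤ u * 2^m + 1 := by nlinarith
      calc k ≤ ⌊u * 2^m + 1⌋ := Int.floor_le_floor hle
        _ = j + 1 := by rw [hj]; exact_mod_cast Int.floor_add_one (u * 2^m)
    have hcases : k = j ∨ k = j + 1 := by omega
    rcases hcases with h | h
    · have : dy m v = dy m u := by rw [dy, dy, ← hj, ← hk, h]
      rw [this, sub_self, abs_zero]
      positivity
    · have hj0 : (0:ℤ) ≤ j := Int.floor_nonneg.2 (mul_nonneg hu.1 h2m.le)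
      have hjlt : j + 1 ≤ 2^m := by
        rw [← h, hk]
        calc ⌊v * 2^m⌋ ≤ ⌊(2:ℝ)^m⌋ := Int.floor_le_floor (by nlinarith [hv.2])
          _ = 2^m := by
            rw [show (2:ℝ)^m = ((2^m : ℤ) : ℝ) by push_cast; ring, Int.floor_intCast]
      have happ := H m hm j hj0 hjlt
      have e1 : ((j : ℤ):ℝ)/2^m = dy m u := by rw [dy, ← hj]
      have e2 : (((j : ℤ):ℝ)+1)/2^m = dy m v := by
        rw [dy, ← hk, h]
        push_cast
        ring
      rw [e1, e2] at happ
      exact happ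
  -- convergence and tail estimate
  have hcau : ∀ u ∈ Set.Icc (0:ℝ) 1,
      Tendsto (fun n => f (dy n u)) atTop (𝓝 (Yr f u)) ∧
      ∀ m ≥ N, |Yr f u - f (dy m u)| ≤ r ^ m / (1 - r) := by
    intro u hu
    set g := fun i => f (dy (N + i) u) with hg
    have hgdist : ∀ i, dist (g i) (g (i+1)) ≤ (r^(N+1)) * r ^ i := by
      intro i
      have hs := hstep (N+i) (Nat.le_add_right N i) u hu
      calc dist (g i) (g (i+1)) = |f (dy (N+i+1) u) - f (dy (N+i) u)| := by
            rw [dist_comm, Real.dist_eq]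
            rfl
        _ ≤ r ^ (N+i+1) := hs
        _ = r^(N+1) * r^i := by ring
    have hgcauchy : CauchySeq g := cauchySeq_of_le_geometric r (r^(N+1)) hr1 hgdist
    obtain ⟨L, hL⟩ := cauchySeq_tendsto_of_complete hgcauchy
    have htend : Tendsto (fun n => f (dy n u)) atTop (𝓝 L) := by
      rw [← tendsto_add_atTop_iff_nat N]
      simpa [hg, add_comm] using hL
    have hYr : Yr f u = L := htend.limUnder_eq
    refine ⟨by rw [hYr]; exact htend, ?_⟩
    intro m hm
    have hdistL := dist_le_of_le_geometric_of_tendsto r (r^(N+1)) hr1 hgdist hL (m - N)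
    have hmn : N + (m - N) = m := Nat.add_sub_cancel' hm
    have hdist2 : dist (f (dy m u)) L ≤ r^(N+1) * r^(m-N)/(1-r) := by
      have : g (m - N) = f (dy m u) := by rw [hg]; simp [hmn]
      rwa [this] at hdistL
    rw [hYr]
    calc |L - f (dy m u)| = dist (f (dy m u)) L := by rw [Real.dist_eq, abs_sub_comm]
      _ ≤ r^(N+1) * r^(m - N)/(1-r) := hdist2
      _ = r^(m+1)/(1-r) := by
          rw [← pow_add, show N+1+(m-N) = m+1 by omega]
      _ ≤ r^m/(1-r) := by
          have hp : r^(m+1) ≤ r^m := pow_le_pow_of_le_one hr0.le hr1.le (Nat.le_succ m)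
          gcongr
  -- modulus of continuity for the limit
  have hmod : ∀ m ≥ N, ∀ u ∈ Set.Icc (0:ℝ) 1, ∀ v ∈ Set.Icc (0:ℝ) 1, |u - v| ≤ (1/2)^m →
      |Yr f u - Yr f v| ≤ (2/(1-r) + 1) * r^m := by
    have key : ∀ m ≥ N, ∀ u ∈ Set.Icc (0:ℝ) 1, ∀ v ∈ Set.Icc (0:ℝ) 1, u ≤ v →
        v - u ≤ (1/2)^m → |Yr f u - Yr f v| ≤ (2/(1-r) + 1) * r^m := by
      intro m hm u hu v hv huv hclose
      have t1 := (hcau u hu).2 m hm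
      have t2 := (hcau v hv).2 m hm
      have t3 := hnbr m hm u v hu hv huv hclose
      have := abs_sub_le (Yr f u) (f (dy m u)) (Yr f v)
      have h4 := abs_sub_le (f (dy m u)) (f (dy m v)) (Yr f v)
      have e1 : |f (dy m u) - f (dy m v)| = |f (dy m v) - f (dy m u)| := abs_sub_comm _ _
      have e2 : |f (dy m v) - Yr f v| = |Yr f v - f (dy m v)| := abs_sub_comm _ _
      have hrm : (0:ℝ) < r ^ m := by positivity
      calc |Yr f u - Yr f v| ≤ |Yr f u - f (dy m u)| + |f (dy m u) - Yr f v| := this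
        _ ≤ |Yr f u - f (dy m u)| + (|f (dy m u) - f (dy m v)| + |f (dy m v) - Yr f v|) :=
            by linarith [h4]
        _ ≤ r^m/(1-r) + (r^m + r^m/(1-r)) := by
            rw [e1, e2] at *
            linarith [t1, t2, t3]
        _ = (2/(1-r) + 1) * r^m := by field_simp; ring
    intro m hm u hu v hv hclose
    rcases le_total u v with h | h
    · refine key m hm u hu v hv h ?_
      rw [abs_sub_comm, abs_of_nonneg (by linarith)] at hclose
      linarith
    · rw [abs_sub_comm]
      refine key m hm v hv u hu h ?_
      rw [abs_of_nonneg (by linarith)] at hclose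
      linarith
  refine ⟨fun u hu => (hcau u hu).1, ?_⟩
  rw [Metric.continuousOn_iff]
  intro t ht ε hε
  have htend0 : Tendsto (fun m : ℕ => (2/(1-r)+1) * r^m) atTop (𝓝 0) := by
    simpa using (tendsto_pow_atTop_nhds_zero_of_lt_one hr0.le hr1).const_mul (2/(1-r)+1)
  obtain ⟨m, hmε, hmN⟩ :=
    ((htend0.eventually (gt_mem_nhds hε)).and (eventually_ge_atTop N)).exists
  refine ⟨(1/2)^m, by positivity, ?_⟩
  intro x hx hdist
  rw [Real.dist_eq] at hdist ⊢
  have := hmod m hmN x hx t ht hdist.le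
  calc |Yr f x - Yr f t| ≤ (2/(1-r) + 1) * r^m := this
    _ < ε := hmε


noncomputable def Ftil (F : ℝ → ℝ) (T : ℝ) : ℝ → ℝ := fun x => F (max 0 (min x T))

lemma Ftil_cont {F : ℝ → ℝ} {T : ℝ} (hT : 0 ≤ T) (hF : ContinuousOn F (Set.Icc 0 T)) :
    Continuous (Ftil F T) := by
  have hc : Continuous (fun x : ℝ => max 0 (min x T)) :=
    continuous_const.max (continuous_id.min continuous_const)
  refine hF.comp_continuous hc fun x => ?_
  exact ⟨le_max_left _ _, max_le hT (min_le_right _ _)⟩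

lemma Ftil_eq {F : ℝ → ℝ} {T : ℝ} {x : ℝ} (hx : x ∈ Set.Icc 0 T) : Ftil F T x = F x := by
  rw [Ftil, min_eq_left hx.2, max_eq_right hx.1]

lemma Ftil_bv {F : ℝ → ℝ} {T : ℝ} (hT : 0 < T) (hbv : BoundedVariationOn F (Set.Icc 0 T)) :
    BoundedVariationOn (Ftil F T) (Set.Icc (-1) (T+1)) := by
  have hi1 : Set.Icc (-1:ℝ) (T+1) ∩ Set.Icc (-1) 0 = Set.Icc (-1:ℝ) 0 := by
    rw [Set.Icc_inter_Icc, sup_idem, inf_eq_right.2 (by linarith : (0:ℝ) ≤ T+1)]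
  have hi2 : Set.Icc (-1:ℝ) (T+1) ∩ Set.Icc 0 (T+1) = Set.Icc (0:ℝ) (T+1) := by
    rw [Set.Icc_inter_Icc, inf_idem, sup_eq_right.2 (by linarith : (-1:ℝ) ≤ 0)]
  have hi3 : Set.Icc (-1:ℝ) (T+1) ∩ Set.Icc (-1) (T+1) = Set.Icc (-1:ℝ) (T+1) :=
    Set.inter_self _
  have hi4 : Set.Icc (-1:ℝ) (T+1) ∩ Set.Icc 0 T = Set.Icc (0:ℝ) T := by
    rw [Set.Icc_inter_Icc, sup_eq_right.2 (by linarith : (-1:ℝ) ≤ 0),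
      inf_eq_right.2 (by linarith : T ≤ T+1)]
  have hi5 : Set.Icc (-1:ℝ) (T+1) ∩ Set.Icc T (T+1) = Set.Icc T (T+1) := by
    rw [Set.Icc_inter_Icc, inf_idem, sup_eq_right.2 (by linarith : (-1:ℝ) ≤ T)]
  have h1 := eVariationOn.Icc_add_Icc (Ftil F T) (s := Set.Icc (-1:ℝ) (T+1))
    (by linarith : (-1:ℝ) ≤ 0) (by linarith : (0:ℝ) ≤ T+1) ⟨by linarith, by linarith⟩
  have h2 := eVariationOn.Icc_add_Icc (Ftil F T) (s := Set.Icc (-1:ℝ) (T+1))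
    (by linarith : (0:ℝ) ≤ T) (by linarith : T ≤ T+1) ⟨by linarith, by linarith⟩
  rw [hi1, hi2, hi3] at h1
  rw [hi4, hi5, hi2] at h2
  have e1 : eVariationOn (Ftil F T) (Set.Icc (-1:ℝ) 0) = 0 := by
    refine eVariationOn.constant_on ?_
    intro a ha b hb
    obtain ⟨x, hx, rfl⟩ := ha
    obtain ⟨y, hy, rfl⟩ := hb
    have hx' : Ftil F T x = F 0 := by
      rw [Ftil, min_eq_left (by linarith [hx.2] : x ≤ T), max_eq_left hx.2]
    have hy' : Ftil F T y = F 0 := by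
      rw [Ftil, min_eq_left (by linarith [hy.2] : y ≤ T), max_eq_left hy.2]
    rw [hx', hy']
  have e2 : eVariationOn (Ftil F T) (Set.Icc T (T+1)) = 0 := by
    refine eVariationOn.constant_on ?_
    intro a ha b hb
    obtain ⟨x, hx, rfl⟩ := ha
    obtain ⟨y, hy, rfl⟩ := hb
    have hx' : Ftil F T x = F T := by
      rw [Ftil, min_eq_right hx.1, max_eq_right hT.le]
    have hy' : Ftil F T y = F T := by
      rw [Ftil, min_eq_right hy.1, max_eq_right hT.le]
    rw [hx', hy']
  have e3 : eVariationOn (Ftil F T) (Set.Icc 0 T) = eVariationOn F (Set.Icc 0 T) :=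
    eVariationOn.eq_of_eqOn (fun x hx => Ftil_eq hx)
  rw [BoundedVariationOn, ← h1, ← h2, e1, e2, e3, zero_add, add_zero]
  exact hbv

open MeasureTheory

/-- a Kolmogorov–Čentsov variant: If a real process
`(X t)_{0 ≤ t ≤ T}` satisfies `E[|X t - X s|^α] ≤ C·|F t - F s|^(1+β)` for a
continuous function `F` of bounded variation on `[0, T]` and constants
`α, β, C > 0`, then `X` admits a modification whose paths are all continuous
on `[0, T]`. -/
theorem stmt_19 {Ω : Type*} [MeasurableSpace Ω] (P : Measure Ω)
    [IsProbabilityMeasure P] (T : ℝ) (hT : 0 < T)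
    (X : ℝ → Ω → ℝ) (hXm : ∀ t, Measurable (X t))
    (α β C : ℝ) (hα : 0 < α) (hβ : 0 < β) (hC : 0 < C)
    (F : ℝ → ℝ) (hFcont : ContinuousOn F (Set.Icc 0 T))
    (hFbv : BoundedVariationOn F (Set.Icc 0 T))
    (hX : ∀ s ∈ Set.Icc (0 : ℝ) T, ∀ t ∈ Set.Icc (0 : ℝ) T,
      ∫⁻ ω, ENNReal.ofReal (|X t ω - X s ω| ^ α) ∂P ≤
        ENNReal.ofReal (C * |F t - F s| ^ (1 + β))) :
    ∃ Y : ℝ → Ω → ℝ,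
      (∀ ω, ContinuousOn (fun t => Y t ω) (Set.Icc 0 T)) ∧
      ∀ t ∈ Set.Icc (0 : ℝ) T, ∀ᵐ ω ∂P, X t ω = Y t ω := by
  classical
  have hT0 : (0:ℝ) ≤ T := hT.le
  set s' : Set ℝ := Set.Icc (-1) (T+1) with hs'
  set Ft := Ftil F T with hFt
  have hFtc : Continuous Ft := Ftil_cont hT0 hFcont
  have hFtbv : BoundedVariationOn Ft s' := Ftil_bv hT hFbv
  have hlbv : LocallyBoundedVariationOn Ft s' := hFtbv.locallyBoundedVariationOn
  set V : ℝ → ℝ := fun x => variationOnFromTo Ft s' (-1) x with hV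
  have hm1 : (-1:ℝ) ∈ s' := ⟨le_rfl, by linarith⟩
  have hsub0T : Set.Icc (0:ℝ) T ⊆ s' := Set.Icc_subset_Icc (by norm_num) (by linarith)
  have hVmono : MonotoneOn V s' := variationOnFromTo.monotoneOn hlbv hm1
  have hVcont : ContinuousOn V (Set.Icc 0 T) :=
    variation_continuousOn hFtc hFtbv (by norm_num) (by linarith)
  set G : ℝ → ℝ := fun x => x + V x with hG
  have hGcont : ContinuousOn G (Set.Icc 0 T) := continuousOn_id.add hVcont
  have hGmono : StrictMonoOn G (Set.Icc 0 T) := by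
    intro x hx y hy hxy
    have := hVmono (hsub0T hx) (hsub0T hy) hxy.le
    exact add_lt_add_of_lt_of_le hxy this
  have hGlip : ∀ x ∈ Set.Icc (0:ℝ) T, ∀ y ∈ Set.Icc (0:ℝ) T, x ≤ y →
      |F y - F x| ≤ G y - G x := by
    intro x hx y hy hxy
    have hxs : x ∈ s' := hsub0T hx
    have hys : y ∈ s' := hsub0T hy
    have hadd := variationOnFromTo.add hlbv hm1 hxs hys
    have hbvxy : BoundedVariationOn Ft (s' ∩ Set.Icc x y) := hFtbv.mono Set.inter_subset_left
    have hxm : x ∈ s' ∩ Set.Icc x y := ⟨hxs, le_rfl, hxy⟩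
    have hym : y ∈ s' ∩ Set.Icc x y := ⟨hys, hxy, le_rfl⟩
    have h1 := hbvxy.sub_le hym hxm
    have h2 := hbvxy.sub_le hxm hym
    have heq : variationOnFromTo Ft s' x y = (eVariationOn Ft (s' ∩ Set.Icc x y)).toReal :=
      variationOnFromTo.eq_of_le Ft _ hxy
    have hFeqx : Ft x = F x := Ftil_eq hx
    have hFeqy : Ft y = F y := Ftil_eq hy
    have habs : |F y - F x| ≤ variationOnFromTo Ft s' x y := by
      rw [heq, abs_sub_le_iff]
      constructor
      · rw [← hFeqx, ← hFeqy]; exact h1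
      · rw [← hFeqx, ← hFeqy]; exact h2
    have hVd : V y - V x = variationOnFromTo Ft s' x y := by
      have := hadd
      simp only [hV] at *
      linarith
    have hGyx : G y - G x = (y - x) + (V y - V x) := by simp only [hG]; ring
    calc |F y - F x| ≤ variationOnFromTo Ft s' x y := habs
      _ = V y - V x := hVd.symm
      _ ≤ G y - G x := by rw [hGyx]; linarith
  set Δ : ℝ := G T - G 0 with hΔdef
  have hTmem : T ∈ Set.Icc (0:ℝ) T := ⟨hT0, le_rfl⟩
  have h0mem : (0:ℝ) ∈ Set.Icc (0:ℝ) T := ⟨le_rfl, hT0⟩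
  have hΔpos : 0 < Δ := sub_pos.2 (hGmono h0mem hTmem hT)
  -- time change
  set φ : ℝ → ℝ := fun u => sInf {x | x ∈ Set.Icc 0 T ∧ G 0 + u * Δ ≤ G x} with hφdef
  have hφ : ∀ u ∈ Set.Icc (0:ℝ) 1, φ u ∈ Set.Icc 0 T ∧ G (φ u) = G 0 + u * Δ := by
    intro u hu
    set v := G 0 + u * Δ with hv
    have hv1 : G 0 ≤ v := by nlinarith [hu.1]
    have hv2 : v ≤ G T := by nlinarith [hu.2]
    have hSne : T ∈ {x | x ∈ Set.Icc 0 T ∧ v ≤ G x} := ⟨hTmem, hv2⟩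
    have hSbd : BddBelow {x | x ∈ Set.Icc 0 T ∧ v ≤ G x} := ⟨0, fun x hx => hx.1.1⟩
    have hSclosed : IsClosed {x | x ∈ Set.Icc 0 T ∧ v ≤ G x} := by
      have he : {x | x ∈ Set.Icc 0 T ∧ v ≤ G x} = Set.Icc 0 T ∩ G ⁻¹' Set.Ici v := rfl
      rw [he]
      exact hGcont.preimage_isClosed_of_isClosed isClosed_Icc isClosed_Ici
    have hmem := hSclosed.csInf_mem ⟨T, hSne⟩ hSbd
    have hφmem : φ u ∈ Set.Icc 0 T := hmem.1
    have hge : v ≤ G (φ u) := hmem.2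
    have hIVT := intermediate_value_Icc hφmem.1
      (hGcont.mono (Set.Icc_subset_Icc le_rfl hφmem.2))
    obtain ⟨x, hx, hGx⟩ := hIVT ⟨hv1, hge⟩
    have hxS : x ∈ {x | x ∈ Set.Icc 0 T ∧ v ≤ G x} := ⟨⟨hx.1, hx.2.trans hφmem.2⟩, hGx.ge⟩
    have hle1 : φ u ≤ x := csInf_le hSbd hxS
    have hxφ : x = φ u := le_antisymm hx.2 hle1
    exact ⟨hφmem, by rw [← hxφ]; exact hGx⟩
  set ψ : ℝ → ℝ := fun t => (G t - G 0) / Δ with hψdef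
  have hψmem : ∀ t ∈ Set.Icc (0:ℝ) T, ψ t ∈ Set.Icc (0:ℝ) 1 := by
    intro t ht
    have h1 : G 0 ≤ G t := hGmono.monotoneOn h0mem ht ht.1
    have h2 : G t ≤ G T := hGmono.monotoneOn ht hTmem ht.2
    constructor
    · exact div_nonneg (by linarith) hΔpos.le
    · rw [div_le_one hΔpos, hΔdef]; linarith
  have hφψ : ∀ t ∈ Set.Icc (0:ℝ) T, φ (ψ t) = t := by
    intro t ht
    have h := hφ (ψ t) (hψmem t ht)
    have hc : ψ t * Δ = G t - G 0 := div_mul_cancel₀ _ hΔpos.ne'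
    have hGeq : G (φ (ψ t)) = G t := by rw [h.2, hc]; ring
    exact hGmono.injOn h.1 ht hGeq
  have hψcont : ContinuousOn ψ (Set.Icc 0 T) := (hGcont.sub continuousOn_const).div_const Δ
  -- moment bound for the time-changed process
  have hZmom : ∀ u ∈ Set.Icc (0:ℝ) 1, ∀ v ∈ Set.Icc (0:ℝ) 1,
      ∫⁻ ω, ENNReal.ofReal (|X (φ v) ω - X (φ u) ω| ^ α) ∂P ≤
        ENNReal.ofReal ((C * Δ ^ (1+β)) * |v - u| ^ (1+β)) := by
    intro u hu v hv
    have hu' := hφ u hu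
    have hv' := hφ v hv
    refine (hX (φ u) hu'.1 (φ v) hv'.1).trans (ENNReal.ofReal_le_ofReal ?_)
    have hFd : |F (φ v) - F (φ u)| ≤ Δ * |v - u| := by
      rcases le_total (φ u) (φ v) with h | h
      · have hg := hGlip _ hu'.1 _ hv'.1 h
        calc |F (φ v) - F (φ u)| ≤ G (φ v) - G (φ u) := hg
          _ = Δ * (v - u) := by rw [hv'.2, hu'.2]; ring
          _ ≤ Δ * |v - u| := mul_le_mul_of_nonneg_left (le_abs_self _) hΔpos.le
      · have hg := hGlip _ hv'.1 _ hu'.1 h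
        calc |F (φ v) - F (φ u)| = |F (φ u) - F (φ v)| := abs_sub_comm _ _
          _ ≤ G (φ u) - G (φ v) := hg
          _ = Δ * (u - v) := by rw [hv'.2, hu'.2]; ring
          _ ≤ Δ * |v - u| := by
              rw [abs_sub_comm]
              exact mul_le_mul_of_nonneg_left (le_abs_self _) hΔpos.le
    calc C * |F (φ v) - F (φ u)| ^ (1+β)
        ≤ C * (Δ * |v - u|) ^ (1+β) := by
          refine mul_le_mul_of_nonneg_left ?_ hC.le
          exact Real.rpow_le_rpow (abs_nonneg _) hFd (by linarith)
      _ = C * Δ^(1+β) * |v - u|^(1+β) := by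
          rw [Real.mul_rpow hΔpos.le (abs_nonneg _)]; ring
  set C' : ℝ := C * Δ ^ (1+β) with hC'
  have hC'pos : 0 < C' := mul_pos hC (Real.rpow_pos_of_pos hΔpos _)
  set γ : ℝ := β / (2*α) with hγdef
  have hγpos : 0 < γ := div_pos hβ (by linarith)
  set r : ℝ := (1/2 : ℝ) ^ γ with hrdef
  have hr0 : 0 < r := Real.rpow_pos_of_pos (by norm_num) _
  have hr1 : r < 1 := Real.rpow_lt_one (by norm_num) (by norm_num) hγpos
  set ρ : ℝ := (1/2 : ℝ) ^ (β/2) with hρdef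
  have hρ0 : 0 < ρ := Real.rpow_pos_of_pos (by norm_num) _
  have hρ1 : ρ < 1 := Real.rpow_lt_one (by norm_num) (by norm_num) (by linarith)
  -- probability bound for a single pair of close times
  have hpair : ∀ n : ℕ, ∀ u ∈ Set.Icc (0:ℝ) 1, ∀ v ∈ Set.Icc (0:ℝ) 1,
      |v - u| ≤ (1/2:ℝ)^n →
      P {ω | r^n < |X (φ v) ω - X (φ u) ω|} ≤
        ENNReal.ofReal (C' * ((1/2:ℝ)^n * ρ^n)) := by
    intro n u hu v hv hd
    have hW : Measurable (fun ω => X (φ v) ω - X (φ u) ω) := (hXm _).sub (hXm _)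
    have hεpos : 0 < r^n := pow_pos hr0 n
    have h2n : (0:ℝ) < (1/2:ℝ)^n := by positivity
    have hBmom : ∫⁻ ω, ENNReal.ofReal (|X (φ v) ω - X (φ u) ω| ^ α) ∂P ≤
        ENNReal.ofReal (C' * ((1/2:ℝ)^n) ^ (1+β)) := by
      refine (hZmom u hu v hv).trans (ENNReal.ofReal_le_ofReal ?_)
      exact mul_le_mul_of_nonneg_left
        (Real.rpow_le_rpow (abs_nonneg _) hd (by linarith)) hC'pos.le
    have hmar := markov_bound P hW hα hεpos hBmom
    refine hmar.trans (le_of_eq (congrArg ENNReal.ofReal ?_))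
    -- exact computation of the quotient
    have hhalf : (0:ℝ) ≤ 1/2 := by norm_num
    have hra : (r^n : ℝ) ^ α = ((1/2:ℝ)^n) ^ (γ*α) := by
      have e1 : r^n = (1/2:ℝ) ^ (γ * (n:ℝ)) := by
        rw [hrdef, ← Real.rpow_natCast ((1/2:ℝ) ^ γ) n, ← Real.rpow_mul hhalf]
      have e2 : ((1/2:ℝ)^n : ℝ) ^ (γ*α) = (1/2:ℝ) ^ ((n:ℝ) * (γ*α)) := by
        rw [← Real.rpow_natCast (1/2:ℝ) n, ← Real.rpow_mul hhalf]
      rw [e1, ← Real.rpow_mul hhalf, e2]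
      congr 1
      ring
    have hγα : γ * α = β/2 := by
      rw [hγdef]; field_simp
    have hρn : ((1/2:ℝ)^n) ^ (β/2) = ρ^n := by
      have e3 : ρ^n = (1/2:ℝ) ^ ((β/2) * (n:ℝ)) := by
        rw [hρdef, ← Real.rpow_natCast ((1/2:ℝ) ^ (β/2)) n, ← Real.rpow_mul hhalf]
      have e4 : ((1/2:ℝ)^n : ℝ) ^ (β/2) = (1/2:ℝ) ^ ((n:ℝ) * (β/2)) := by
        rw [← Real.rpow_natCast (1/2:ℝ) n, ← Real.rpow_mul hhalf]
      rw [e3, e4]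
      congr 1
      ring
    have hnum : ((1/2:ℝ)^n) ^ ((1:ℝ)+β) = ((1/2:ℝ)^n) * (((1/2:ℝ)^n) ^ β) := by
      rw [Real.rpow_add h2n, Real.rpow_one]
    have hβsplit : ((1/2:ℝ)^n) ^ β = ((1/2:ℝ)^n)^(β/2) * ((1/2:ℝ)^n)^(β/2) := by
      rw [← Real.rpow_add h2n]; ring_nf
    have hρnpos : (0:ℝ) < ρ^n := pow_pos hρ0 n
    rw [hra, hγα, hnum, hβsplit, hρn]
    field_simp
  -- the dyadic grid events
  set A : ℕ → Set Ω := fun n => {ω | ∃ k : ℤ, 0 ≤ k ∧ k + 1 ≤ 2^n ∧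
      r^n < |X (φ (((k:ℝ)+1)/2^n)) ω - X (φ ((k:ℝ)/2^n)) ω|} with hA
  have hAbound : ∀ n, P (A n) ≤ ENNReal.ofReal (C' * ρ^n) := by
    intro n
    have h2n : (0:ℝ) < (2:ℝ)^n := by positivity
    have hsubA : A n ⊆ ⋃ k ∈ Finset.Ico (0:ℤ) (2^n),
        {ω | r^n < |X (φ (((k:ℝ)+1)/2^n)) ω - X (φ ((k:ℝ)/2^n)) ω|} := by
      intro ω hω
      obtain ⟨k, hk0, hk1, hk2⟩ := hω
      exact Set.mem_biUnion (Finset.mem_Ico.2 ⟨hk0, by omega⟩) hk2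
    refine (measure_mono hsubA).trans ?_
    refine (measure_biUnion_finset_le _ _).trans ?_
    have hterm : ∀ k ∈ Finset.Ico (0:ℤ) (2^n),
        P {ω | r^n < |X (φ (((k:ℝ)+1)/2^n)) ω - X (φ ((k:ℝ)/2^n)) ω|} ≤
          ENNReal.ofReal (C' * ((1/2:ℝ)^n * ρ^n)) := by
      intro k hk
      rw [Finset.mem_Ico] at hk
      have hk0 : (0:ℝ) ≤ (k:ℝ) := by exact_mod_cast hk.1
      have hk1 : (k:ℝ) + 1 ≤ (2:ℝ)^n := by
        have : ((k+1 : ℤ) : ℝ) ≤ ((2^n : ℤ) : ℝ) := by exact_mod_cast hk.2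
        push_cast at this
        linarith
      have humem : (k:ℝ)/2^n ∈ Set.Icc (0:ℝ) 1 := by
        constructor
        · positivity
        · rw [div_le_one h2n]; linarith
      have hvmem : ((k:ℝ)+1)/2^n ∈ Set.Icc (0:ℝ) 1 := by
        constructor
        · positivity
        · rw [div_le_one h2n]; linarith
      have hdiff : |((k:ℝ)+1)/2^n - (k:ℝ)/2^n| ≤ (1/2:ℝ)^n := by
        rw [div_sub_div_same, add_sub_cancel_left, div_pow, one_pow]
        rw [abs_of_nonneg (by positivity)]
      exact hpair n _ humem _ hvmem hdiff
    refine (Finset.sum_le_sum hterm).trans ?_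
    rw [Finset.sum_const]
    have hcard : (Finset.Ico (0:ℤ) (2^n)).card = 2^n := by
      rw [Int.card_Ico, sub_zero,
        show ((2:ℤ)^n) = ((2^n : ℕ) : ℤ) by push_cast; ring, Int.toNat_natCast]
    rw [hcard, nsmul_eq_mul]
    have hcast : ((2^n : ℕ) : ENNReal) = ENNReal.ofReal ((2:ℝ)^n) := by
      rw [← ENNReal.ofReal_natCast]
      congr 1
      push_cast
      ring
    rw [hcast, ← ENNReal.ofReal_mul (by positivity)]
    refine ENNReal.ofReal_le_ofReal (le_of_eq ?_)
    have : (2:ℝ)^n * (1/2:ℝ)^n = 1 := by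
      rw [div_pow, one_pow, mul_div_cancel₀]
      exact ne_of_gt (by positivity)
    calc (2:ℝ)^n * (C' * ((1/2:ℝ)^n * ρ^n)) = ((2:ℝ)^n * (1/2:ℝ)^n) * (C' * ρ^n) := by ring
      _ = C' * ρ^n := by rw [this, one_mul]
  have hAsum : ∑' n, P (A n) ≠ ⊤ :=
    ne_top_of_le_ne_top (tsum_ofReal_geom_ne_top hC'pos.le hρ0.le hρ1)
      (ENNReal.tsum_le_tsum hAbound)
  have hGood : ∀ᵐ ω ∂P, ∃ N, ∀ n ≥ N, ∀ k : ℤ, 0 ≤ k → k + 1 ≤ 2^n →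
      |X (φ (((k:ℝ)+1)/2^n)) ω - X (φ ((k:ℝ)/2^n)) ω| ≤ r^n := by
    filter_upwards [ae_eventually_notin P A hAsum] with ω hω
    obtain ⟨N, hN⟩ := hω
    refine ⟨N, fun n hn k hk0 hk1 => ?_⟩
    by_contra hcon
    push_neg at hcon
    exact hN n hn ⟨k, hk0, hk1, hcon⟩
  set Good : Ω → Prop := fun ω => ∃ N, ∀ n ≥ N, ∀ k : ℤ, 0 ≤ k → k + 1 ≤ 2^n →
      |X (φ (((k:ℝ)+1)/2^n)) ω - X (φ ((k:ℝ)/2^n)) ω| ≤ r^n with hGoodDef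
  refine ⟨fun t ω => if Good ω then Yr (fun w => X (φ w) ω) (ψ t) else 0, ?_, ?_⟩
  · intro ω
    by_cases hg : Good ω
    · simp only [if_pos hg]
      obtain ⟨N, hN⟩ := hg
      have hchain := chain_all (f := fun w => X (φ w) ω) hr0 hr1 hN
      exact hchain.2.comp hψcont (fun t ht => hψmem t ht)
    · simp only [if_neg hg]
      exact continuousOn_const
  · intro t ht
    have humem : ψ t ∈ Set.Icc (0:ℝ) 1 := hψmem t ht
    set B : ℕ → Set Ω := fun n =>
      {ω | r^n < |X (φ (ψ t)) ω - X (φ (dy n (ψ t))) ω|} with hB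
    have hBbound : ∀ n, P (B n) ≤ ENNReal.ofReal (C' * ρ^n) := by
      intro n
      have hdd : |ψ t - dy n (ψ t)| ≤ (1/2:ℝ)^n := by
        rw [abs_of_nonneg (sub_nonneg.2 (dy_le n (ψ t)))]
        exact (dy_lt n (ψ t)).le
      have h1 := hpair n (dy n (ψ t)) (dy_mem humem n) (ψ t) humem hdd
      refine h1.trans (ENNReal.ofReal_le_ofReal ?_)
      have hle1 : (1/2:ℝ)^n ≤ 1 := pow_le_one₀ (by norm_num) (by norm_num)
      have hpos : (0:ℝ) ≤ C' * ρ^n := le_of_lt (mul_pos hC'pos (pow_pos hρ0 n))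
      calc C' * ((1/2:ℝ)^n * ρ^n) = (1/2:ℝ)^n * (C' * ρ^n) := by ring
        _ ≤ 1 * (C' * ρ^n) := mul_le_mul_of_nonneg_right hle1 hpos
        _ = C' * ρ^n := one_mul _
    have hBsum : ∑' n, P (B n) ≠ ⊤ :=
      ne_top_of_le_ne_top (tsum_ofReal_geom_ne_top hC'pos.le hρ0.le hρ1)
        (ENNReal.tsum_le_tsum hBbound)
    filter_upwards [hGood, ae_eventually_notin P B hBsum] with ω hgood hBev
    obtain ⟨N, hN⟩ := hgood
    have hchain := chain_all (f := fun w => X (φ w) ω) hr0 hr1 hN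
    have h1 : Tendsto (fun n => X (φ (dy n (ψ t))) ω) atTop
        (𝓝 (Yr (fun w => X (φ w) ω) (ψ t))) := hchain.1 (ψ t) humem
    obtain ⟨M, hM⟩ := hBev
    have h2 : Tendsto (fun n => X (φ (dy n (ψ t))) ω) atTop (𝓝 (X (φ (ψ t)) ω)) := by
      have hdist : ∀ n ≥ M, ‖X (φ (dy n (ψ t))) ω - X (φ (ψ t)) ω‖ ≤ r^n := by
        intro n hn
        have hnm := hM n hn
        simp only [hB, Set.mem_setOf_eq, not_lt] at hnm
        rw [Real.norm_eq_abs, abs_sub_comm]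
        exact hnm
      have h0 : Tendsto (fun n : ℕ => (r:ℝ)^n) atTop (𝓝 0) :=
        tendsto_pow_atTop_nhds_zero_of_lt_one hr0.le hr1
      have hz := squeeze_zero_norm' (Filter.eventually_atTop.2 ⟨M, hdist⟩) h0
      have := hz.add_const (X (φ (ψ t)) ω)
      simpa using this
    have hXY : X (φ (ψ t)) ω = Yr (fun w => X (φ w) ω) (ψ t) := tendsto_nhds_unique h2 h1
    have hGoodω : Good ω := ⟨N, hN⟩
    rw [if_pos hGoodω, ← hXY, hφψ t ht]
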